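/- Let β > 0, μ > 0, γ > 0, p ∈ (0,1), δ = β/(γ+μ). Suppose (S0, S1, A, R) satisfies μ - βS0A - μS0 = 0, (1-p)βS0A - βS1A - μS1 = 0, β(pS0 + S1)A - (γ+μ)A = 0, γA - μR = 0, with A ≠ 0. Then S0 = 1/(δ(γ/μ + 1)A + 1), S1 = (1-p)δ(γ/μ + 1)A/(δ(γ/μ + 1)A + 1)², R = (γ/μ)A, pS0 + S1 = 1/δ, and moreover δ ≥ 4(1-p) and A = (1/2)(1 + γ/μ)⁻¹(1 - 2/δ + √(1 - 4(1-p)/δ)) or A = (1/2)(1 + γ/μ)⁻¹(1 - 2/δ - √(1 - 4(1-p)/δ)). -/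

import Mathlib

/-- any equilibrium of the temporary adoption model with `A ≠ 0`
satisfies the stated explicit formulas for `S0`, `S1`, `R`, the relation
`pS0 + S1 = 1/δ`, and its adopter level `A` is one of the two explicit roots;
in particular `δ ≥ 4(1-p)`. -/
theorem stmt_10 (β μ γ p δ S0 S1 A R : ℝ) (hβ : 0 < β) (hμ : 0 < μ) (hγ : 0 < γ)
    (hp : p ∈ Set.Ioo (0:ℝ) 1) (hδ : δ = β / (γ + μ))
    (h1 : μ - β * S0 * A - μ * S0 = 0)
    (h2 : (1 - p) * β * S0 * A - β * S1 * A - μ * S1 = 0)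
    (h3 : β * (p * S0 + S1) * A - (γ + μ) * A = 0)
    (h4 : γ * A - μ * R = 0)
    (hA : A ≠ 0) :
    S0 = 1 / (δ * (γ / μ + 1) * A + 1) ∧
    S1 = (1 - p) * δ * (γ / μ + 1) * A / (δ * (γ / μ + 1) * A + 1) ^ 2 ∧
    R = (γ / μ) * A ∧
    p * S0 + S1 = 1 / δ ∧
    4 * (1 - p) ≤ δ ∧
    (A = (1 / 2) * (1 + γ / μ)⁻¹ * (1 - 2 / δ + Real.sqrt (1 - 4 * (1 - p) / δ)) ∨
     A = (1 / 2) * (1 + γ / μ)⁻¹ * (1 - 2 / δ - Real.sqrt (1 - 4 * (1 - p) / δ))) := by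
  obtain ⟨hp0, hp1⟩ := hp
  have hγμ : (0:ℝ) < γ + μ := by linarith
  have hδpos : 0 < δ := hδ ▸ div_pos hβ hγμ
  have hβδ : δ * (γ + μ) = β := by rw [hδ]; field_simp
  have hS0 : S0 * (β * A + μ) = μ := by linear_combination -h1
  have hx : β * A + μ ≠ 0 := by
    intro h; rw [h, mul_zero] at hS0; exact hμ.ne' hS0.symm
  have hS1 : S1 * (β * A + μ) = (1 - p) * β * S0 * A := by linear_combination -h2
  have h5 : β * (p * S0 + S1) = γ + μ := by
    rcases mul_eq_zero.mp (show (β * (p * S0 + S1) - (γ + μ)) * A = 0 by linear_combination h3) with h | h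
    · linarith
    · exact absurd h hA
  have hden : δ * (γ / μ + 1) * A + 1 = (β * A + μ) / μ := by
    field_simp
    rw [hβδ]; ring
  have c1 : S0 = 1 / (δ * (γ / μ + 1) * A + 1) := by
    rw [hden, one_div, inv_div, eq_div_iff hx]
    linarith [hS0]
  have c2 : S1 = (1 - p) * δ * (γ / μ + 1) * A / (δ * (γ / μ + 1) * A + 1) ^ 2 := by
    have key2 : S1*(β*A+μ)^2 = (1-p)*β*μ*A := by
      linear_combination (β*A+μ)*hS1 + (1-p)*β*A*hS0
    rw [hden, hδ]
    field_simp
    linear_combination key2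
  have c3 : R = (γ / μ) * A := by
    field_simp
    linarith [h4]
  have c4 : p * S0 + S1 = 1 / δ := by
    rw [eq_div_iff hδpos.ne']
    have : β * (p * S0 + S1) = δ * (γ + μ) * (p * S0 + S1) := by rw [hβδ]
    have hβne : β ≠ 0 := hβ.ne'
    field_simp [hδ]
    apply mul_right_cancel₀ hγμ.ne'
    linear_combination h5 + (p*S0+S1)*hβδ
  -- quadratic
  have hq : (γ + μ) * (β * A + μ)^2 - β * μ * (β * A + μ) + (1 - p) * β * μ^2 = 0 := by
    linear_combination (-(β*A+μ)^2) * h5 + (β*p*(β*A+μ) + (1-p)*β^2*A) * hS0 + (β*(β*A+μ)) * hS1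
  have hdisc : (2*(γ+μ)*(β*A+μ) - β*μ)^2 = β*μ^2*(β - 4*(1-p)*(γ+μ)) := by
    linear_combination (4*(γ+μ)) * hq
  have hDnn : 0 ≤ β - 4*(1-p)*(γ+μ) := by nlinarith [sq_nonneg (2*(γ+μ)*(β*A+μ) - β*μ), mul_pos hβ (pow_pos hμ 2)]
  have c5 : 4 * (1 - p) ≤ δ := by
    rw [hδ, le_div_iff₀ hγμ]; linarith
  have hrad : (0:ℝ) ≤ 1 - 4*(1-p)/δ := by
    rw [sub_nonneg, div_le_one hδpos]; linarith
  set s := Real.sqrt (1 - 4*(1-p)/δ) with hs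
  have hs0 : 0 ≤ s := Real.sqrt_nonneg _
  have hs2 : s^2 = 1 - 4*(1-p)/δ := Real.sq_sqrt hrad
  have hβs : (β*μ*s)^2 = β*μ^2*(β - 4*(1-p)*(γ+μ)) := by
    have : β^2 * (1 - 4*(1-p)/δ) = β*(β - 4*(1-p)*(γ+μ)) := by
      field_simp [hδ]
      linear_combination 4*(1-p)*hβδ
    calc (β*μ*s)^2 = μ^2 * (β^2 * s^2) := by ring
    _ = μ^2 * (β^2 * (1 - 4*(1-p)/δ)) := by rw [hs2]
    _ = β*μ^2*(β - 4*(1-p)*(γ+μ)) := by rw [this]; ring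
  have hfac : (2*(γ+μ)*(β*A+μ) - β*μ - β*μ*s) * (2*(γ+μ)*(β*A+μ) - β*μ + β*μ*s) = 0 := by
    linear_combination hdisc - hβs
  have c6 : (A = (1 / 2) * (1 + γ / μ)⁻¹ * (1 - 2 / δ + s) ∨
     A = (1 / 2) * (1 + γ / μ)⁻¹ * (1 - 2 / δ - s)) := by
    have h1γμ : (1 + γ/μ) ≠ 0 := by positivity
    rcases mul_eq_zero.mp hfac with h | h
    · left
      rw [hδ]
      field_simp
      linear_combination h
    · right
      rw [hδ]
      field_simp
      linear_combination h
  exact ⟨c1, c2, c3, c4, c5, c6⟩
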